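/- Fix γ > 1 and ρ₀ > 0. For ρ₁ > ρ₀ define u₁(ρ₁) = (ρ₁ − ρ₀)√(2(ρ₁^{γ−1} − ρ₀^{γ−1})/(ρ₁² − ρ₀²)) and c₁(ρ₁) = ρ₁^{(γ−1)/2}. Then there exists ρ^c > ρ₀ such that u₁(ρ₁) ≤ c₁(ρ₁) for all ρ₁ ∈ (ρ₀, ρ^c], and u₁(ρ₁) > c₁(ρ₁) for all ρ₁ ∈ (ρ^c, ∞). -/

import Mathlib

/-- Reduction of the sonic inequality to a polynomial-type inequality. -/
lemma aux_iff_19 (γ ρ₀ ρ₁ : ℝ) (hγ : 1 < γ) (hρ₀ : 0 < ρ₀) (h : ρ₀ < ρ₁) :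
    ((ρ₁ - ρ₀) * Real.sqrt (2 * (ρ₁ ^ (γ - 1) - ρ₀ ^ (γ - 1)) / (ρ₁ ^ 2 - ρ₀ ^ 2))
      ≤ ρ₁ ^ ((γ - 1) / 2))
    ↔ (ρ₁ - 3 * ρ₀) * ρ₁ ^ (γ - 1) ≤ 2 * (ρ₁ - ρ₀) * ρ₀ ^ (γ - 1) := by
  have hd : 0 < ρ₁ - ρ₀ := sub_pos.2 h
  have hρ₁ : 0 < ρ₁ := hρ₀.trans h
  have hγ1 : 0 < γ - 1 := by linarith
  have hB : 0 < ρ₁ ^ (γ - 1) := Real.rpow_pos_of_pos hρ₁ _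
  have hC : 0 < ρ₀ ^ (γ - 1) := Real.rpow_pos_of_pos hρ₀ _
  have hΔ : 0 < ρ₁ ^ (γ - 1) - ρ₀ ^ (γ - 1) := by
    have := Real.rpow_lt_rpow hρ₀.le h hγ1
    linarith
  have hsum : 0 < ρ₁ + ρ₀ := by linarith
  have hsq : ρ₁ ^ 2 - ρ₀ ^ 2 = (ρ₁ - ρ₀) * (ρ₁ + ρ₀) := by ring
  have hA : 0 ≤ 2 * (ρ₁ ^ (γ - 1) - ρ₀ ^ (γ - 1)) / (ρ₁ ^ 2 - ρ₀ ^ 2) := by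
    rw [hsq]
    positivity
  -- rewrite RHS as a square root
  have hrhs : ρ₁ ^ ((γ - 1) / 2) = Real.sqrt (ρ₁ ^ (γ - 1)) := by
    rw [Real.sqrt_eq_rpow, ← Real.rpow_mul hρ₁.le]
    congr 1
    ring
  -- rewrite LHS as a square root
  have hlhs : (ρ₁ - ρ₀) * Real.sqrt (2 * (ρ₁ ^ (γ - 1) - ρ₀ ^ (γ - 1)) / (ρ₁ ^ 2 - ρ₀ ^ 2))
      = Real.sqrt ((ρ₁ - ρ₀) ^ 2 * (2 * (ρ₁ ^ (γ - 1) - ρ₀ ^ (γ - 1)) / (ρ₁ ^ 2 - ρ₀ ^ 2))) := by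
    rw [Real.sqrt_mul (sq_nonneg _), Real.sqrt_sq hd.le]
  rw [hlhs, hrhs, Real.sqrt_le_sqrt_iff (by positivity)]
  have harg : (ρ₁ - ρ₀) ^ 2 * (2 * (ρ₁ ^ (γ - 1) - ρ₀ ^ (γ - 1)) / (ρ₁ ^ 2 - ρ₀ ^ 2))
      = 2 * (ρ₁ - ρ₀) * (ρ₁ ^ (γ - 1) - ρ₀ ^ (γ - 1)) / (ρ₁ + ρ₀) := by
    rw [hsq]
    field_simp
  rw [harg, div_le_iff₀ hsum]
  have key : 2 * (ρ₁ - ρ₀) * (ρ₁ ^ (γ - 1) - ρ₀ ^ (γ - 1)) - ρ₁ ^ (γ - 1) * (ρ₁ + ρ₀)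
      = (ρ₁ - 3 * ρ₀) * ρ₁ ^ (γ - 1) - 2 * (ρ₁ - ρ₀) * ρ₀ ^ (γ - 1) := by ring
  constructor <;> intro hh <;> linarith [key]

/-- Strict monotonicity of `H ρ = (ρ - 3ρ₀)/(ρ - ρ₀) * ρ^(γ-1)` on `[3ρ₀, ∞)`. -/
lemma aux_mono_19 (γ ρ₀ a b : ℝ) (hγ : 1 < γ) (hρ₀ : 0 < ρ₀)
    (ha : 3 * ρ₀ ≤ a) (hab : a < b) :
    (a - 3 * ρ₀) / (a - ρ₀) * a ^ (γ - 1) < (b - 3 * ρ₀) / (b - ρ₀) * b ^ (γ - 1) := by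
  have ha0 : 0 < a := by linarith
  have hda : 0 < a - ρ₀ := by linarith
  have hdb : 0 < b - ρ₀ := by linarith
  have hγ1 : 0 < γ - 1 := by linarith
  have hqa : 0 < a ^ (γ - 1) := Real.rpow_pos_of_pos ha0 _
  have hqb : 0 < b ^ (γ - 1) := Real.rpow_pos_of_pos (by linarith) _
  have hq : a ^ (γ - 1) < b ^ (γ - 1) := Real.rpow_lt_rpow ha0.le hab hγ1
  have hpa : 0 ≤ (a - 3 * ρ₀) / (a - ρ₀) := div_nonneg (by linarith) hda.le
  have hp : (a - 3 * ρ₀) / (a - ρ₀) < (b - 3 * ρ₀) / (b - ρ₀) := by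
    rw [div_lt_div_iff₀ hda hdb]
    nlinarith [mul_pos hρ₀ (sub_pos.2 hab)]
  calc (a - 3 * ρ₀) / (a - ρ₀) * a ^ (γ - 1)
      ≤ (a - 3 * ρ₀) / (a - ρ₀) * b ^ (γ - 1) := by
        exact mul_le_mul_of_nonneg_left hq.le hpa
    _ < (b - 3 * ρ₀) / (b - ρ₀) * b ^ (γ - 1) :=
        mul_lt_mul_of_pos_right hp hqb

/-- Fix `γ > 1` and `ρ₀ > 0`, and for `ρ₁ > ρ₀` let
`u₁(ρ₁) = (ρ₁ − ρ₀)√(2(ρ₁^{γ−1} − ρ₀^{γ−1})/(ρ₁² − ρ₀²))` (the upstream speed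
of state (1) in the von Neumann shock reflection-diffraction problem) and
`c₁(ρ₁) = ρ₁^{(γ−1)/2}` (its sonic speed).  Then there is a critical density
`ρ^c > ρ₀` with `u₁ ≤ c₁` for `ρ₁ ∈ (ρ₀, ρ^c]` and `u₁ > c₁` for
`ρ₁ ∈ (ρ^c, ∞)`. -/
theorem stmt_19 (γ ρ₀ : ℝ) (hγ : 1 < γ) (hρ₀ : 0 < ρ₀) :
    ∃ ρc : ℝ, ρ₀ < ρc ∧
      (∀ ρ₁ : ℝ, ρ₀ < ρ₁ → ρ₁ ≤ ρc →
        (ρ₁ - ρ₀) * Real.sqrt (2 * (ρ₁ ^ (γ - 1) - ρ₀ ^ (γ - 1)) / (ρ₁ ^ 2 - ρ₀ ^ 2))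
          ≤ ρ₁ ^ ((γ - 1) / 2)) ∧
      (∀ ρ₁ : ℝ, ρc < ρ₁ →
        ρ₁ ^ ((γ - 1) / 2) <
          (ρ₁ - ρ₀) * Real.sqrt (2 * (ρ₁ ^ (γ - 1) - ρ₀ ^ (γ - 1)) / (ρ₁ ^ 2 - ρ₀ ^ 2))) := by
  have hγ1 : 0 < γ - 1 := by linarith
  have hC : 0 < ρ₀ ^ (γ - 1) := Real.rpow_pos_of_pos hρ₀ _
  set H : ℝ → ℝ := fun ρ => (ρ - 3 * ρ₀) / (ρ - ρ₀) * ρ ^ (γ - 1) with hH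
  set M : ℝ := max (5 * ρ₀) (ρ₀ * (4 : ℝ) ^ (γ - 1)⁻¹) with hM
  have hM5 : 5 * ρ₀ ≤ M := le_max_left _ _
  have hM4 : ρ₀ * (4 : ℝ) ^ (γ - 1)⁻¹ ≤ M := le_max_right _ _
  have hM3 : 3 * ρ₀ ≤ M := by linarith
  have hM0 : 0 < M := by linarith
  -- value at M is at least 2 ρ₀^(γ-1)
  have hHM : 2 * ρ₀ ^ (γ - 1) ≤ H M := by
    have hdM : 0 < M - ρ₀ := by linarith
    have hp : (1 : ℝ) / 2 ≤ (M - 3 * ρ₀) / (M - ρ₀) := by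
      rw [div_le_div_iff₀ (by norm_num) hdM]
      linarith
    have hq : 4 * ρ₀ ^ (γ - 1) ≤ M ^ (γ - 1) := by
      have h1 : (ρ₀ * (4 : ℝ) ^ (γ - 1)⁻¹) ^ (γ - 1) ≤ M ^ (γ - 1) :=
        Real.rpow_le_rpow (by positivity) hM4 hγ1.le
      have h2 : (ρ₀ * (4 : ℝ) ^ (γ - 1)⁻¹) ^ (γ - 1)
          = ρ₀ ^ (γ - 1) * 4 := by
        rw [Real.mul_rpow hρ₀.le (by positivity),
          ← Real.rpow_mul (by norm_num : (0:ℝ) ≤ 4),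
          inv_mul_cancel₀ (ne_of_gt hγ1), Real.rpow_one]
      linarith
    have hqpos : 0 < M ^ (γ - 1) := Real.rpow_pos_of_pos hM0 _
    have : (1 : ℝ) / 2 * (4 * ρ₀ ^ (γ - 1)) ≤ (M - 3 * ρ₀) / (M - ρ₀) * M ^ (γ - 1) := by
      apply mul_le_mul hp hq (by positivity)
      linarith [hp]
    simpa [hH] using (by linarith : 2 * ρ₀ ^ (γ - 1) ≤ (M - 3 * ρ₀) / (M - ρ₀) * M ^ (γ - 1))
  -- continuity of H on [3ρ₀, M]
  have hcont : ContinuousOn H (Set.Icc (3 * ρ₀) M) := by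
    apply ContinuousOn.mul
    · apply ContinuousOn.div (by fun_prop) (by fun_prop)
      intro x hx
      have : 3 * ρ₀ ≤ x := hx.1
      intro hc
      have : x = ρ₀ := by linarith [sub_eq_zero.1 hc]
      linarith
    · apply ContinuousOn.rpow_const (by fun_prop)
      intro x hx
      left
      have : 3 * ρ₀ ≤ x := hx.1
      have hx0 : 0 < x := by linarith
      exact ne_of_gt hx0
  -- IVT
  have hH3 : H (3 * ρ₀) = 0 := by simp [hH]
  have hmem : 2 * ρ₀ ^ (γ - 1) ∈ Set.Icc (H (3 * ρ₀)) (H M) := by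
    rw [hH3]; exact ⟨by linarith, hHM⟩
  obtain ⟨ρc, hρcmem, hρceq⟩ := intermediate_value_Icc hM3 hcont hmem
  have hρc3 : 3 * ρ₀ ≤ ρc := hρcmem.1
  have hρcgt3 : 3 * ρ₀ < ρc := by
    rcases eq_or_lt_of_le hρc3 with he | hl
    · exfalso
      rw [← he, hH3] at hρceq
      nlinarith
    · exact hl
  refine ⟨ρc, by linarith, ?_, ?_⟩
  · intro ρ₁ h1 h2
    rw [aux_iff_19 γ ρ₀ ρ₁ hγ hρ₀ h1]
    have hd : 0 < ρ₁ - ρ₀ := by linarith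
    have hB : 0 < ρ₁ ^ (γ - 1) := Real.rpow_pos_of_pos (by linarith) _
    rcases le_or_gt ρ₁ (3 * ρ₀) with h3 | h3
    · have : (ρ₁ - 3 * ρ₀) * ρ₁ ^ (γ - 1) ≤ 0 :=
        mul_nonpos_of_nonpos_of_nonneg (by linarith) hB.le
      nlinarith
    · have hHle : H ρ₁ ≤ 2 * ρ₀ ^ (γ - 1) := by
        rcases eq_or_lt_of_le h2 with he | hl
        · rw [he, hρceq]
        · rw [← hρceq]
          exact (aux_mono_19 γ ρ₀ ρ₁ ρc hγ hρ₀ h3.le hl).le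
      have : (ρ₁ - 3 * ρ₀) / (ρ₁ - ρ₀) * ρ₁ ^ (γ - 1) ≤ 2 * ρ₀ ^ (γ - 1) := hHle
      rw [div_mul_eq_mul_div, div_le_iff₀ hd] at this
      linarith [this]
  · intro ρ₁ h1
    have hρ1 : ρ₀ < ρ₁ := by linarith
    rw [← not_le, aux_iff_19 γ ρ₀ ρ₁ hγ hρ₀ hρ1, not_le]
    have hd : 0 < ρ₁ - ρ₀ := by linarith
    have hHgt : 2 * ρ₀ ^ (γ - 1) < H ρ₁ := by
      rw [← hρceq]
      exact aux_mono_19 γ ρ₀ ρc ρ₁ hγ hρ₀ hρc3 h1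
    have : 2 * ρ₀ ^ (γ - 1) < (ρ₁ - 3 * ρ₀) / (ρ₁ - ρ₀) * ρ₁ ^ (γ - 1) := hHgt
    rw [div_mul_eq_mul_div, lt_div_iff₀ hd] at this
    linarith [this]
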